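/- arXiv:2602.20376 — 2 statements merged into one kernel-verified Lean document; each statement's English description precedes it below -/
import Mathlib

section
/- For a complex vector a ∈ ℂⁿ and z ∈ 𝒜_Kⁿ, the maximum over z of |z† a| equals the maximum over z ∈ 𝒜_Kⁿ and φ ∈ [0, 2π) of Re(z† a · e^{iφ}), and this in turn equals max over φ of the sum over i of max over z_i ∈ 𝒜_K of Re(conj(z_i)·a_i·e^{iφ}). -/
open Complex BigOperators

lemma phase_exists (w : ℂ) : ∃ φ ∈ Set.Ico (0:ℝ) (2*Real.pi),
    (w * Complex.exp (φ * Complex.I)).re = ‖w‖ := by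
  have hw := Complex.norm_mul_exp_arg_mul_I w
  have h1 := Complex.arg_le_pi w
  have h2 := Complex.neg_pi_lt_arg w
  have hpi := Real.pi_pos
  have key : (w * Complex.exp ((-w.arg : ℝ) * Complex.I)).re = ‖w‖ := by
    have hcast : ((-w.arg : ℝ) : ℂ) * Complex.I = -((w.arg : ℂ) * Complex.I) := by
      push_cast; ring
    nth_rewrite 1 [← hw]
    rw [hcast, mul_assoc, ← Complex.exp_add, add_neg_cancel, Complex.exp_zero, mul_one,
      Complex.ofReal_re]
  by_cases h : 0 ≤ -w.arg
  · refine ⟨-w.arg, ⟨h, by linarith⟩, key⟩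
  · refine ⟨2*Real.pi - w.arg, ⟨by linarith, by linarith⟩, ?_⟩
    have : Complex.exp (((2*Real.pi - w.arg : ℝ)) * Complex.I)
        = Complex.exp ((-w.arg : ℝ) * Complex.I) := by
      push_cast
      rw [sub_mul, Complex.exp_sub, Complex.exp_two_pi_mul_I, neg_mul, Complex.exp_neg, one_div]
    rw [this, key]

lemma maxroot {K : ℕ} (hK : 0 < K) (f : ℂ → ℝ) :
    ∃ z0 : ℂ, z0 ^ K = 1 ∧ IsGreatest {y : ℝ | ∃ zi : ℂ, zi ^ K = 1 ∧ y = f zi} (f z0) := by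
  have hfin : ({z : ℂ | z ^ K = 1}).Finite := by
    have : {z : ℂ | z ^ K = 1} = ↑(Polynomial.nthRootsFinset K (1 : ℂ)) := by
      ext x; simp [Polynomial.mem_nthRootsFinset hK (1 : ℂ)]
    rw [this]; exact (Polynomial.nthRootsFinset K (1 : ℂ)).finite_toSet
  obtain ⟨z0, hz0, hmax⟩ := Set.exists_max_image {z : ℂ | z ^ K = 1} f hfin ⟨1, one_pow K⟩
  refine ⟨z0, hz0, ⟨z0, hz0, rfl⟩, ?_⟩
  rintro y ⟨zi, hzi, rfl⟩
  exact hmax zi hzi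

/-- The double-maximization reformulation: for `a ∈ ℂⁿ`,
`max_{z ∈ 𝒜_Kⁿ} |z† a| = max_{z, φ} Re(z† a e^{iφ}) = max_φ ∑ᵢ max_{zᵢ} Re(conj zᵢ · aᵢ · e^{iφ})`. -/
theorem stmt_5 (n K : ℕ) (hK : 0 < K) (a : Fin n → ℂ) :
    sSup {x : ℝ | ∃ z : Fin n → ℂ, (∀ i, z i ^ K = 1) ∧
        x = ‖∑ i, (starRingEnd ℂ) (z i) * a i‖} =
      sSup {x : ℝ | ∃ (z : Fin n → ℂ) (φ : ℝ), (∀ i, z i ^ K = 1) ∧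
        φ ∈ Set.Ico (0 : ℝ) (2 * Real.pi) ∧
        x = ((∑ i, (starRingEnd ℂ) (z i) * a i) * Complex.exp (φ * Complex.I)).re} ∧
    sSup {x : ℝ | ∃ (z : Fin n → ℂ) (φ : ℝ), (∀ i, z i ^ K = 1) ∧
        φ ∈ Set.Ico (0 : ℝ) (2 * Real.pi) ∧
        x = ((∑ i, (starRingEnd ℂ) (z i) * a i) * Complex.exp (φ * Complex.I)).re} =
      sSup {x : ℝ | ∃ φ : ℝ, φ ∈ Set.Ico (0 : ℝ) (2 * Real.pi) ∧
        x = ∑ i, sSup {y : ℝ | ∃ zi : ℂ, zi ^ K = 1 ∧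
          y = ((starRingEnd ℂ) zi * a i * Complex.exp (φ * Complex.I)).re}} := by
  constructor
  · apply csSup_eq_csSup_of_forall_exists_le
    · rintro x ⟨z, hz, rfl⟩
      obtain ⟨φ, hφ, hre⟩ := phase_exists (∑ i, (starRingEnd ℂ) (z i) * a i)
      exact ⟨_, ⟨z, φ, hz, hφ, rfl⟩, hre.ge⟩
    · rintro y ⟨z, φ, hz, hφ, rfl⟩
      refine ⟨_, ⟨z, hz, rfl⟩, ?_⟩
      calc ((∑ i, (starRingEnd ℂ) (z i) * a i) * Complex.exp (φ * Complex.I)).re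
          ≤ ‖(∑ i, (starRingEnd ℂ) (z i) * a i) * Complex.exp (φ * Complex.I)‖ :=
            Complex.re_le_norm _
        _ = ‖∑ i, (starRingEnd ℂ) (z i) * a i‖ := by
            rw [norm_mul, Complex.norm_exp_ofReal_mul_I, mul_one]
  · apply csSup_eq_csSup_of_forall_exists_le
    · rintro x ⟨z, φ, hz, hφ, rfl⟩
      refine ⟨_, ⟨φ, hφ, rfl⟩, ?_⟩
      rw [Finset.sum_mul, Complex.re_sum]
      apply Finset.sum_le_sum
      intro i _
      obtain ⟨z0, hz0, hg⟩ := maxroot hK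
        (fun zi => ((starRingEnd ℂ) zi * a i * Complex.exp (φ * Complex.I)).re)
      rw [hg.csSup_eq]
      exact hg.2 ⟨z i, hz i, rfl⟩
    · rintro y ⟨φ, hφ, rfl⟩
      choose z0 hz0 hg using fun i => maxroot hK
        (fun zi => ((starRingEnd ℂ) zi * a i * Complex.exp (φ * Complex.I)).re)
      refine ⟨_, ⟨z0, φ, hz0, hφ, rfl⟩, ?_⟩
      rw [Finset.sum_mul, Complex.re_sum]
      exact le_of_eq (Finset.sum_congr rfl fun i _ => (hg i).csSup_eq)
end

section
/- Fix K ≥ 3 and a vector u ∈ ℂⁿ. There exists a choice of z ∈ 𝒜_Kⁿ (taking z_ℓ to be the K-th root of unity whose phase sector contains arg(u_ℓ)) such that |z† u|² ≥ cos²(π/K)·‖u‖₁², and in particular |z† u|² ≥ (1/4)·‖u‖₁² since cos(π/K) ≥ 1/2 for K ≥ 3. -/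
open Complex BigOperators

lemma key_root (K : ℕ) (hK : 1 ≤ K) (u : ℂ) :
    ∃ z : ℂ, z ^ K = 1 ∧
      Real.cos (Real.pi / K) * ‖u‖ ≤ ((starRingEnd ℂ) z * u).re := by
  have hKpos : (0 : ℝ) < K := by exact_mod_cast hK
  have hπ := Real.pi_pos
  set θ := Complex.arg u with hθ
  set k : ℤ := round (θ * K / (2 * Real.pi)) with hk
  set α : ℝ := 2 * Real.pi * k / K with hα
  refine ⟨Complex.exp (α * Complex.I), ?_, ?_⟩
  · rw [← Complex.exp_nat_mul]
    have hKne : (K : ℂ) ≠ 0 := Nat.cast_ne_zero.mpr (by omega)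
    have : (K : ℂ) * (α * Complex.I) = (k : ℤ) * (2 * Real.pi * Complex.I) := by
      push_cast [hα]
      field_simp
    rw [this, Complex.exp_int_mul_two_pi_mul_I]
  · have hconj : (starRingEnd ℂ) (Complex.exp (α * Complex.I)) =
        Complex.exp ((-α : ℝ) * Complex.I) := by
      rw [← Complex.exp_conj]
      push_cast
      simp [map_mul, Complex.conj_I]
    have hu : u = (‖u‖ : ℂ) * Complex.exp (θ * Complex.I) := by
      rw [hθ, Complex.norm_mul_exp_arg_mul_I]
    have hre : ((starRingEnd ℂ) (Complex.exp (α * Complex.I)) * u).re =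
        ‖u‖ * Real.cos (θ - α) := by
      conv_lhs => rw [hconj, hu, mul_left_comm, ← Complex.exp_add]
      have harg : (↑(-α) * Complex.I + ↑θ * Complex.I) = ((θ - α : ℝ)) * Complex.I := by
        push_cast; ring
      rw [harg, Complex.re_ofReal_mul, Complex.exp_ofReal_mul_I_re]
    rw [hre]
    have habs : |θ - α| ≤ Real.pi / K := by
      have h1 : |θ * K / (2 * Real.pi) - k| ≤ 1 / 2 := abs_sub_round _
      have : θ - α = (2 * Real.pi / K) * (θ * K / (2 * Real.pi) - k) := by
        rw [hα]; field_simp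
      rw [this, abs_mul, abs_of_pos (by positivity : (0:ℝ) < 2 * Real.pi / K)]
      calc 2 * Real.pi / K * |θ * K / (2 * Real.pi) - k|
          ≤ 2 * Real.pi / K * (1 / 2) := by
            apply mul_le_mul_of_nonneg_left h1 (by positivity)
        _ = Real.pi / K := by ring
    have hcos : Real.cos (Real.pi / K) ≤ Real.cos (θ - α) := by
      rw [← Real.cos_abs (θ - α)]
      apply Real.cos_le_cos_of_nonneg_of_le_pi (abs_nonneg _)
      · calc Real.pi / K ≤ Real.pi / 1 := by
              apply div_le_div_of_nonneg_left hπ.le one_pos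
              exact_mod_cast hK
          _ = Real.pi := by ring
      · exact habs
    calc Real.cos (Real.pi / K) * ‖u‖
        ≤ Real.cos (θ - α) * ‖u‖ :=
          mul_le_mul_of_nonneg_right hcos (norm_nonneg _)
      _ = ‖u‖ * Real.cos (θ - α) := mul_comm _ _

/-- For `K ≥ 3` and `u ∈ ℂⁿ`, there is `z ∈ 𝒜_Kⁿ` with
`|z† u|² ≥ cos²(π/K)·‖u‖₁² ≥ (1/4)·‖u‖₁²`. -/
theorem stmt_16 (n K : ℕ) (hK : 3 ≤ K) (u : Fin n → ℂ) :
    ∃ z : Fin n → ℂ, (∀ l, z l ^ K = 1) ∧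
      Real.cos (Real.pi / K) ^ 2 * (∑ l, ‖u l‖) ^ 2 ≤
        ‖∑ l, (starRingEnd ℂ) (z l) * u l‖ ^ 2 ∧
      (1 / 4 : ℝ) * (∑ l, ‖u l‖) ^ 2 ≤
        ‖∑ l, (starRingEnd ℂ) (z l) * u l‖ ^ 2 := by
  have hK1 : 1 ≤ K := le_trans (by norm_num) hK
  choose z hz1 hz2 using fun l => key_root K hK1 (u l)
  have hπ := Real.pi_pos
  have hKpos : (0 : ℝ) < K := by exact_mod_cast hK1
  have hhalf : (1 / 2 : ℝ) ≤ Real.cos (Real.pi / K) := by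
    rw [← Real.cos_pi_div_three]
    apply Real.cos_le_cos_of_nonneg_of_le_pi (by positivity)
    · linarith [Real.pi_pos]
    · apply div_le_div_of_nonneg_left hπ.le (by norm_num)
      exact_mod_cast hK
  have hcosnn : (0 : ℝ) ≤ Real.cos (Real.pi / K) := by linarith
  have hsum : Real.cos (Real.pi / K) * (∑ l, ‖u l‖) ≤
      ‖∑ l, (starRingEnd ℂ) (z l) * u l‖ := by
    calc Real.cos (Real.pi / K) * (∑ l, ‖u l‖)
        = ∑ l, Real.cos (Real.pi / K) * ‖u l‖ := by
          rw [Finset.mul_sum]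
      _ ≤ ∑ l, ((starRingEnd ℂ) (z l) * u l).re :=
          Finset.sum_le_sum fun l _ => hz2 l
      _ = (∑ l, (starRingEnd ℂ) (z l) * u l).re := by
          rw [Complex.re_sum]
      _ ≤ ‖∑ l, (starRingEnd ℂ) (z l) * u l‖ := Complex.re_le_norm _
  have hLnn : (0 : ℝ) ≤ Real.cos (Real.pi / K) * (∑ l, ‖u l‖) := by
    apply mul_nonneg hcosnn
    exact Finset.sum_nonneg fun l _ => norm_nonneg _
  have hsq : (Real.cos (Real.pi / K) * (∑ l, ‖u l‖)) ^ 2 ≤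
      ‖∑ l, (starRingEnd ℂ) (z l) * u l‖ ^ 2 :=
    pow_le_pow_left₀ hLnn hsum 2
  rw [mul_pow] at hsq
  refine ⟨z, hz1, hsq, le_trans ?_ hsq⟩
  have hsnn : (0 : ℝ) ≤ (∑ l, ‖u l‖) ^ 2 := sq_nonneg _
  have : (1 / 4 : ℝ) ≤ Real.cos (Real.pi / K) ^ 2 := by nlinarith
  nlinarith
end
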